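/- Let 0 ≤ ρ_L < 1, q_L > 0, and let ρ_R, q_R satisfy 1 − q_L ≤ ρ_R ≤ 1 and 0 < q_R < ρ_R + q_L − 1. Suppose m : (0,∞) → ℝ is such that for every H > 0, m(H) ∈ (ρ_R − q_R, 1) and m(H) + q_R − ρ_R = q_L (1−m(H))^H/(1−ρ_L)^H. Then m(H) → 1 as H → 0⁺. That is, the intermediate density of the Riemann problem converges to the maximal density 1 in the limit of vanishing look-ahead parameter. -/

import Mathlib

/-- The intermediate density m(H) of the Riemann problem, solving
m + q_R - ρ_R = q_L (1-m)^H/(1-ρ_L)^H with m(H) ∈ (ρ_R - q_R, 1), converges to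
the maximal density 1 as the look-ahead parameter H → 0⁺. -/
theorem stmt19 (ρL qL ρR qR : ℝ) (hρL0 : 0 ≤ ρL) (hρL1 : ρL < 1) (hqL : 0 < qL)
    (hρR1 : 1 - qL ≤ ρR) (hρR2 : ρR ≤ 1)
    (hqR1 : 0 < qR) (hqR2 : qR < ρR + qL - 1)
    (m : ℝ → ℝ)
    (hm : ∀ H > (0 : ℝ), m H ∈ Set.Ioo (ρR - qR) 1 ∧
      m H + qR - ρR = qL * (1 - m H) ^ H / (1 - ρL) ^ H) :
    Filter.Tendsto m (nhdsWithin 0 (Set.Ioi 0)) (nhds 1) := by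
  have h1L : (0 : ℝ) < 1 - ρL := by linarith
  have hδ : (0 : ℝ) < ρR + qL - 1 - qR := by linarith
  set δ : ℝ := ρR + qL - 1 - qR with hδdef
  rw [Metric.tendsto_nhdsWithin_nhds]
  intro ε hε
  set a : ℝ := min (ε / (1 - ρL)) 1 with hadef
  have ha0 : 0 < a := lt_min (div_pos hε h1L) one_pos
  have hcont : Filter.Tendsto (fun H : ℝ => a ^ H) (nhds 0) (nhds 1) := by
    have := (Real.continuousAt_const_rpow (a := a) (b := 0) ha0.ne')
    simpa [Real.rpow_zero, ContinuousAt] using this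
  have hev : ∀ᶠ H in nhds (0 : ℝ), a ^ H > 1 - δ / (2 * qL) := by
    have hmem : Set.Ioi (1 - δ / (2 * qL)) ∈ nhds (1 : ℝ) := by
      apply Ioi_mem_nhds
      have : 0 < δ / (2 * qL) := div_pos hδ (by linarith)
      linarith
    exact hcont hmem
  rw [Metric.eventually_nhds_iff] at hev
  obtain ⟨δ0, hδ0, hball⟩ := hev
  refine ⟨δ0, hδ0, ?_⟩
  intro H hH hdist
  have hHpos : (0 : ℝ) < H := hH
  obtain ⟨⟨hm1, hm2⟩, heq⟩ := hm H hHpos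
  have haH : a ^ H > 1 - δ / (2 * qL) := hball hdist
  have hclaim : m H > 1 - ε := by
    by_contra hcon
    push_neg at hcon
    have hx : (0 : ℝ) < 1 - m H := by linarith
    have hxa : a ≤ (1 - m H) / (1 - ρL) := by
      refine (min_le_left _ _).trans ?_
      gcongr
      linarith
    have hxH : a ^ H ≤ ((1 - m H) / (1 - ρL)) ^ H :=
      Real.rpow_le_rpow ha0.le hxa hHpos.le
    have hrw : (1 - m H) ^ H / (1 - ρL) ^ H = ((1 - m H) / (1 - ρL)) ^ H :=
      (Real.div_rpow hx.le h1L.le H).symm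
    rw [mul_div_assoc, hrw] at heq
    have h1 : qL * a ^ H ≤ qL * ((1 - m H) / (1 - ρL)) ^ H :=
      mul_le_mul_of_nonneg_left hxH hqL.le
    have h2 : qL * (1 - δ / (2 * qL)) < qL * a ^ H :=
      mul_lt_mul_of_pos_left haH hqL
    have h3 : qL * (1 - δ / (2 * qL)) = qL - δ / 2 := by
      field_simp
    -- LHS = m H + qR - ρR ≤ 1 - ε + qR - ρR = qL - δ - ε
    nlinarith [heq, h1, h2, h3]
  have hdm : dist (m H) 1 < ε := by
    rw [Real.dist_eq, abs_sub_comm, abs_of_pos (by linarith)]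
    linarith
  exact hdm
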